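/- Let N be an odd positive integer. For every F ∈ SL(2, ℤ/Nℤ), the metaplectic (Clifford) unitary U_F satisfies |Tr(U_F)| ≥ 1; in particular Tr(U_F) ≠ 0. -/

import Mathlib

noncomputable section

/-- The cyclic shift (translation) matrix on `ℂ^{ℤ/Nℤ}`: `(Tf)(g) = f(g-1)`. -/
def shiftMat (N : ℕ) [NeZero N] : Matrix (ZMod N) (ZMod N) ℂ :=
  Matrix.of fun g h => if g = h + 1 then 1 else 0

/-- The modulation matrix: `(Mf)(g) = ω^g f(g)` with `ω = e^{2πi/N}`. -/
def modMat (N : ℕ) [NeZero N] : Matrix (ZMod N) (ZMod N) ℂ :=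
  Matrix.diagonal fun g => Complex.exp (2 * Real.pi * Complex.I / N) ^ g.val

/-- The Weyl–Heisenberg displacement operators
`D_λ = τ^{λ₁λ₂} T^{λ₁} M^{λ₂}`, `τ = -e^{πi/N}`. -/
def dispMat (N : ℕ) [NeZero N] (lam : Fin 2 → ZMod N) : Matrix (ZMod N) (ZMod N) ℂ :=
  ((-Complex.exp (Real.pi * Complex.I / N)) ^ ((lam 0).val * (lam 1).val)) •
    (shiftMat N ^ (lam 0).val * modMat N ^ (lam 1).val)

namespace CT

def ζ (N : ℕ) : ℂ := Complex.exp (2 * Real.pi * Complex.I / N)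

def e {N : ℕ} [NeZero N] (x : ZMod N) : ℂ := ζ N ^ x.val

lemma hζ (N : ℕ) [NeZero N] : IsPrimitiveRoot (ζ N) N :=
  Complex.isPrimitiveRoot_exp N (NeZero.ne N)

lemma zeta_pow_N (N : ℕ) [NeZero N] : ζ N ^ N = 1 := (hζ N).pow_eq_one

variable {N : ℕ} [NeZero N]

lemma zeta_pow_nat (m : ℕ) : ζ N ^ m = e ((m : ZMod N)) := by
  conv_lhs => rw [← Nat.div_add_mod m N, pow_add, pow_mul, zeta_pow_N, one_pow, one_mul]
  rw [e, ZMod.val_natCast]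

lemma e_val (x : ZMod N) : e x = ζ N ^ x.val := rfl

lemma e_zero : e (0 : ZMod N) = 1 := by simp [e]

lemma e_add (x y : ZMod N) : e (x + y) = e x * e y := by
  have h : ((x.val + y.val : ℕ) : ZMod N) = x + y := by
    push_cast [ZMod.natCast_val]; simp [ZMod.cast_id]
  rw [← h, ← zeta_pow_nat, pow_add, e_val, e_val]

lemma e_mul_nat (x : ZMod N) (n : ℕ) : e ((n : ZMod N) * x) = e x ^ n := by
  induction n with
  | zero => simp [e_zero]
  | succ n ih =>
    push_cast
    rw [add_mul, one_mul, e_add, ih, pow_succ]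

lemma e_ne_zero (x : ZMod N) : e x ≠ 0 := by
  have h : e x * e (-x) = 1 := by rw [← e_add]; simp [e_zero]
  intro h0; rw [h0, zero_mul] at h; exact zero_ne_one h

lemma e_neg (x : ZMod N) : e (-x) = (e x)⁻¹ := by
  have h : e x * e (-x) = 1 := by rw [← e_add]; simp [e_zero]
  exact eq_inv_of_mul_eq_one_right h

lemma abs_e (x : ZMod N) : ‖e x‖ = 1 := by
  rw [e_val, norm_pow]
  have : ‖ζ N‖ = 1 := by
    have : (2 * Real.pi * Complex.I / N) = ((2 * Real.pi / N : ℝ) : ℂ) * Complex.I := by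
      push_cast; ring
    rw [ζ, this, Complex.norm_exp_ofReal_mul_I]
  rw [this, one_pow]

lemma e_conj (x : ZMod N) : (starRingEnd ℂ) (e x) = e (-x) := by
  rw [e_neg, Complex.inv_def, Complex.normSq_eq_norm_sq, abs_e]
  simp

lemma sum_e (k : ZMod N) : (∑ b : ZMod N, e (k * b)) = if k = 0 then (N : ℂ) else 0 := by
  have h1 : ∀ b : ZMod N, e (k * b) = (e k) ^ b.val := by
    intro b
    rw [← e_mul_nat, mul_comm, ZMod.natCast_val, ZMod.cast_id]
  have h2 : (∑ b : ZMod N, e (k * b)) = ∑ j ∈ Finset.range N, (e k) ^ j := by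
    rw [Finset.sum_congr rfl fun b _ => h1 b]
    exact Finset.sum_nbij' (fun b => b.val) (fun j => (j : ZMod N))
      (fun b _ => Finset.mem_range.2 (ZMod.val_lt b)) (fun j _ => Finset.mem_univ _)
      (fun b _ => by simp [ZMod.natCast_val, ZMod.cast_id])
      (fun j hj => ZMod.val_natCast_of_lt (Finset.mem_range.1 hj))
      (fun b _ => rfl)
  rw [h2]
  by_cases hk : k = 0
  · simp [hk, e_zero, ZMod.card]
  · have hne : e k ≠ 1 := by
      rw [e_val]
      intro h
      have hdvd := ((hζ N).pow_eq_one_iff_dvd k.val).1 h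
      have hv : k.val < N := ZMod.val_lt k
      have hv0 : k.val ≠ 0 := fun h0 => hk (by rwa [← ZMod.val_eq_zero])
      rcases hdvd with ⟨c, hc⟩
      rcases c with _ | c
      · omega
      · nlinarith [Nat.le_add_left 0 c]
    have hpow : (e k) ^ N = 1 := by
      rw [e_val, ← pow_mul, mul_comm, pow_mul, zeta_pow_N, one_pow]
    rw [geom_sum_eq hne, hpow]
    simp [hk]


/-- the "half" element -/
def c (N : ℕ) [NeZero N] : ZMod N := (((N + 1) / 2 : ℕ) : ZMod N)

lemma two_mul_c (hN : Odd N) : (2 : ZMod N) * c N = 1 := by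
  obtain ⟨k, hk⟩ := hN
  have h : 2 * ((N + 1) / 2) = N + 1 := by omega
  have : ((2 * ((N + 1) / 2) : ℕ) : ZMod N) = ((N + 1 : ℕ) : ZMod N) := by rw [h]
  push_cast at this
  simpa [c] using this

lemma tau_eq (hN : Odd N) : (-Complex.exp (Real.pi * Complex.I / N)) = ζ N ^ ((N + 1) / 2) := by
  have hNC : (N : ℂ) ≠ 0 := by exact_mod_cast (NeZero.ne N)
  have hτ2 : (-Complex.exp (Real.pi * Complex.I / N)) ^ 2 = ζ N := by
    rw [neg_pow, ← Complex.exp_nat_mul]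
    norm_num [ζ]
    ring_nf
  have hτN : (-Complex.exp (Real.pi * Complex.I / N)) ^ N = 1 := by
    rw [neg_pow, ← Complex.exp_nat_mul]
    have : (N : ℂ) * (Real.pi * Complex.I / N) = Real.pi * Complex.I := by
      field_simp
    rw [this, Complex.exp_pi_mul_I]
    rcases hN with ⟨k, hk⟩
    subst hk
    rw [pow_succ, pow_mul]
    norm_num
  obtain ⟨k, hk⟩ := hN
  have h2 : 2 * ((N + 1) / 2) = N + 1 := by omega
  calc (-Complex.exp (Real.pi * Complex.I / N))
      = (-Complex.exp (Real.pi * Complex.I / N)) ^ (N + 1) := by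
        rw [pow_succ, hτN, one_mul]
    _ = ((-Complex.exp (Real.pi * Complex.I / N)) ^ 2) ^ ((N + 1) / 2) := by
        rw [← pow_mul, h2]
    _ = ζ N ^ ((N + 1) / 2) := by rw [hτ2]

lemma tau_pow (hN : Odd N) (m : ℕ) :
    (-Complex.exp (Real.pi * Complex.I / N)) ^ m = e (c N * (m : ZMod N)) := by
  rw [tau_eq hN, ← pow_mul, zeta_pow_nat]
  congr 1
  unfold c
  push_cast
  ring

lemma shift_pow_apply (k : ℕ) (g h : ZMod N) :
    (shiftMat N ^ k) g h = if g = h + (k : ZMod N) then 1 else 0 := by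
  induction k generalizing g h with
  | zero => simp [Matrix.one_apply, eq_comm]
  | succ k ih =>
    rw [pow_succ, Matrix.mul_apply]
    have hterm : ∀ j : ZMod N, (shiftMat N ^ k) g j * shiftMat N j h
        = if j = h + 1 then (if g = h + 1 + (k : ZMod N) then 1 else 0) else 0 := by
      intro j
      rw [ih, shiftMat]
      by_cases hj : j = h + 1 <;> simp [hj, Matrix.of_apply]
    rw [Finset.sum_congr rfl fun j _ => hterm j,
      Finset.sum_ite_eq' Finset.univ (h + 1) fun _ => if g = h + 1 + (k : ZMod N) then 1 else 0]
    push_cast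
    have harr : h + 1 + (k : ZMod N) = h + ((k : ZMod N) + 1) := by ring
    simp [harr]

lemma mod_pow_apply (m : ℕ) (g h : ZMod N) :
    (modMat N ^ m) g h = if g = h then e ((m : ZMod N) * g) else 0 := by
  rw [modMat, Matrix.diagonal_pow, Matrix.diagonal_apply]
  by_cases hgh : g = h
  · rw [if_pos hgh, if_pos hgh, Pi.pow_apply]
    show (ζ N ^ g.val) ^ m = _
    rw [← pow_mul, zeta_pow_nat]
    congr 1
    push_cast [ZMod.natCast_val, ZMod.cast_id]
    ring
  · simp [hgh]

lemma dispMat_apply (hN : Odd N) (lam : Fin 2 → ZMod N) (g h : ZMod N) :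
    dispMat N lam g h =
      if g = h + lam 0 then e (c N * (lam 0 * lam 1) + h * lam 1) else 0 := by
  rw [dispMat]
  have hcast : ∀ x : ZMod N, ((x.val : ℕ) : ZMod N) = x := fun x => by
    simp [ZMod.natCast_val, ZMod.cast_id]
  simp only [Matrix.smul_apply, Matrix.mul_apply, mod_pow_apply, shift_pow_apply,
    smul_eq_mul]
  rw [Finset.sum_eq_single h]
  · rw [tau_pow hN, if_pos rfl]
    push_cast [hcast]
    by_cases hg : g = h + lam 0
    · simp only [if_pos hg, one_mul]
      rw [e_add, mul_comm (lam 1) h]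
    · simp [hg]
  · intro b _ hb
    simp [hb]
  · simp


omit [NeZero N] in
lemma fun_eq_iff (lam mu : Fin 2 → ZMod N) : lam = mu ↔ lam 0 = mu 0 ∧ lam 1 = mu 1 := by
  constructor
  · rintro rfl; exact ⟨rfl, rfl⟩
  · rintro ⟨h0, h1⟩; funext i; fin_cases i <;> assumption

lemma e_sub (x y : ZMod N) : e (x - y) = e x * (e y)⁻¹ := by
  rw [sub_eq_add_neg, e_add, e_neg]

lemma trace_disp_mul_conj (hN : Odd N) (lam mu : Fin 2 → ZMod N) :
    (dispMat N lam * (dispMat N mu).conjTranspose).trace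
      = if lam = mu then (N : ℂ) else 0 := by
  classical
  have hterm : ∀ g j : ZMod N,
      dispMat N lam g j * (dispMat N mu).conjTranspose j g
        = if g = j + lam 0 then
            (if lam 0 = mu 0 then
              e ((c N * (lam 0 * lam 1) + j * lam 1) - (c N * (mu 0 * mu 1) + j * mu 1))
             else 0)
          else 0 := by
    intro g j
    rw [Matrix.conjTranspose_apply, dispMat_apply hN, dispMat_apply hN]
    by_cases hg : g = j + lam 0
    · by_cases h0 : lam 0 = mu 0
      · have hg' : g = j + mu 0 := by rw [hg, h0]
        simp only [if_pos hg, if_pos hg', if_pos h0]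
        rw [RCLike.star_def, e_conj, e_neg, e_sub]
      · have hg' : ¬ g = j + mu 0 := by
          intro hc
          exact h0 (by rwa [hg, add_right_inj] at hc)
        simp only [if_pos hg, if_neg hg', if_neg h0, star_zero, mul_zero]
    · simp only [if_neg hg, zero_mul]
  rw [Matrix.trace]
  simp only [Matrix.diag_apply, Matrix.mul_apply]
  rw [Finset.sum_comm]
  rw [Finset.sum_congr rfl fun j _ => Finset.sum_congr rfl fun g _ => hterm g j]
  rw [Finset.sum_congr rfl fun j _ =>
    Finset.sum_ite_eq' Finset.univ (j + lam 0) (fun _ =>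
      if lam 0 = mu 0 then
        e ((c N * (lam 0 * lam 1) + j * lam 1) - (c N * (mu 0 * mu 1) + j * mu 1))
      else 0)]
  simp only [Finset.mem_univ, if_true]
  by_cases h0 : lam 0 = mu 0
  · simp only [if_pos h0]
    have harg : ∀ j : ZMod N,
        (c N * (lam 0 * lam 1) + j * lam 1) - (c N * (mu 0 * mu 1) + j * mu 1)
          = (lam 1 - mu 1) * (c N * lam 0 + j) := by
      intro j; rw [← h0]; ring
    rw [Finset.sum_congr rfl fun j _ => by rw [harg j]]
    have hre : (∑ j : ZMod N, e ((lam 1 - mu 1) * (c N * lam 0 + j)))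
        = ∑ b : ZMod N, e ((lam 1 - mu 1) * b) :=
      Fintype.sum_equiv (Equiv.addLeft (c N * lam 0)) _ _ (fun j => rfl)
    rw [hre, sum_e]
    by_cases h1 : lam 1 = mu 1
    · rw [if_pos (sub_eq_zero.mpr h1), if_pos ((fun_eq_iff lam mu).mpr ⟨h0, h1⟩)]
    · rw [if_neg (fun hc => h1 (sub_eq_zero.mp hc)),
        if_neg (fun hc => h1 (((fun_eq_iff lam mu).mp hc).2))]
  · simp only [if_neg h0, Finset.sum_const_zero]
    rw [if_neg (fun hc => h0 (((fun_eq_iff lam mu).mp hc).1))]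


lemma disp_mul_apply (hN : Odd N) (lam : Fin 2 → ZMod N) (A : Matrix (ZMod N) (ZMod N) ℂ)
    (g q : ZMod N) :
    (dispMat N lam * A) g q
      = e (c N * (lam 0 * lam 1) + (g - lam 0) * lam 1) * A (g - lam 0) q := by
  rw [Matrix.mul_apply]
  have hterm : ∀ p : ZMod N, dispMat N lam g p * A p q
      = if p = g - lam 0 then
          e (c N * (lam 0 * lam 1) + (g - lam 0) * lam 1) * A (g - lam 0) q else 0 := by
    intro p
    rw [dispMat_apply hN]
    by_cases hp : p = g - lam 0
    · have hg : g = p + lam 0 := by rw [hp]; ring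
      rw [if_pos hg, if_pos hp, hp]
    · have hg : ¬ g = p + lam 0 := fun hc => hp (by rw [hc]; ring)
      rw [if_neg hg, if_neg hp, zero_mul]
  rw [Finset.sum_congr rfl fun p _ => hterm p, Finset.sum_ite_eq' Finset.univ (g - lam 0)]
  simp

lemma disp_conj_apply (hN : Odd N) (lam : Fin 2 → ZMod N) (A : Matrix (ZMod N) (ZMod N) ℂ)
    (g h : ZMod N) :
    (dispMat N lam * A * (dispMat N lam).conjTranspose) g h
      = e ((g - h) * lam 1) * A (g - lam 0) (h - lam 0) := by
  rw [Matrix.mul_apply]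
  have hterm : ∀ q : ZMod N, (dispMat N lam * A) g q * (dispMat N lam).conjTranspose q h
      = if q = h - lam 0 then
          e ((g - h) * lam 1) * A (g - lam 0) (h - lam 0) else 0 := by
    intro q
    rw [Matrix.conjTranspose_apply, disp_mul_apply hN, dispMat_apply hN]
    by_cases hq : q = h - lam 0
    · have hh : h = q + lam 0 := by rw [hq]; ring
      rw [if_pos hh, if_pos hq, RCLike.star_def, e_conj, e_neg, hq]
      rw [mul_comm (e (c N * (lam 0 * lam 1) + (g - lam 0) * lam 1)) (A _ _), mul_assoc,
        ← e_sub]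
      have harg : (c N * (lam 0 * lam 1) + (g - lam 0) * lam 1)
          - (c N * (lam 0 * lam 1) + (h - lam 0) * lam 1) = (g - h) * lam 1 := by ring
      rw [harg]
      ring
    · have hh : ¬ h = q + lam 0 := fun hc => hq (by rw [hc]; ring)
      rw [if_neg hh, star_zero, mul_zero, if_neg hq]
  rw [Finset.sum_congr rfl fun q _ => hterm q, Finset.sum_ite_eq' Finset.univ (h - lam 0)]
  simp

lemma sum_trace_conj (hN : Odd N) (U : Matrix (ZMod N) (ZMod N) ℂ) :
    (∑ lam : Fin 2 → ZMod N,
        (dispMat N lam * U * (dispMat N lam).conjTranspose * U.conjTranspose).trace)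
      = (N : ℂ) * U.trace * (starRingEnd ℂ) U.trace := by
  classical
  -- rewrite each trace as a double sum
  have htr : ∀ lam : Fin 2 → ZMod N,
      (dispMat N lam * U * (dispMat N lam).conjTranspose * U.conjTranspose).trace
        = ∑ g : ZMod N, ∑ h : ZMod N,
            e ((g - h) * lam 1) * U (g - lam 0) (h - lam 0) * (starRingEnd ℂ) (U g h) := by
    intro lam
    rw [Matrix.trace]
    refine Finset.sum_congr rfl fun g _ => ?_
    rw [Matrix.diag_apply, Matrix.mul_apply]
    refine Finset.sum_congr rfl fun h _ => ?_
    rw [disp_conj_apply hN, Matrix.conjTranspose_apply, RCLike.star_def]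
  rw [Finset.sum_congr rfl fun lam _ => htr lam]
  -- replace sum over functions by sum over pairs
  have hpair : (∑ lam : Fin 2 → ZMod N, ∑ g : ZMod N, ∑ h : ZMod N,
        e ((g - h) * lam 1) * U (g - lam 0) (h - lam 0) * (starRingEnd ℂ) (U g h))
      = ∑ a : ZMod N, ∑ b : ZMod N, ∑ g : ZMod N, ∑ h : ZMod N,
          e ((g - h) * b) * U (g - a) (h - a) * (starRingEnd ℂ) (U g h) := by
    calc (∑ lam : Fin 2 → ZMod N, ∑ g : ZMod N, ∑ h : ZMod N,
          e ((g - h) * lam 1) * U (g - lam 0) (h - lam 0) * (starRingEnd ℂ) (U g h))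
        = ∑ p : ZMod N × ZMod N, ∑ g : ZMod N, ∑ h : ZMod N,
            e ((g - h) * p.2) * U (g - p.1) (h - p.1) * (starRingEnd ℂ) (U g h) :=
          Fintype.sum_equiv (piFinTwoEquiv fun _ => ZMod N) _ _ (fun lam => rfl)
      _ = _ := Fintype.sum_prod_type _
  rw [hpair]
  -- move the b-sum inside
  have hswap : ∀ a : ZMod N, (∑ b : ZMod N, ∑ g : ZMod N, ∑ h : ZMod N,
        e ((g - h) * b) * U (g - a) (h - a) * (starRingEnd ℂ) (U g h))
      = ∑ g : ZMod N, ∑ h : ZMod N, (∑ b : ZMod N, e ((g - h) * b)) *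
          (U (g - a) (h - a) * (starRingEnd ℂ) (U g h)) := by
    intro a
    rw [Finset.sum_comm]
    refine Finset.sum_congr rfl fun g _ => ?_
    rw [Finset.sum_comm]
    refine Finset.sum_congr rfl fun h _ => ?_
    rw [Finset.sum_mul]
    refine Finset.sum_congr rfl fun b _ => by ring
  rw [Finset.sum_congr rfl fun a _ => hswap a]
  -- evaluate the character sum
  have hchar : ∀ a g h : ZMod N, (∑ b : ZMod N, e ((g - h) * b)) *
        (U (g - a) (h - a) * (starRingEnd ℂ) (U g h))
      = if h = g then (N : ℂ) * (U (g - a) (g - a) * (starRingEnd ℂ) (U g g)) else 0 := by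
    intro a g h
    rw [sum_e]
    by_cases hgh : h = g
    · rw [if_pos (by rw [hgh]; ring : g - h = 0), if_pos hgh, hgh]
    · have h1 : ¬ (g - h = 0) := fun hc => hgh (sub_eq_zero.mp hc).symm
      rw [if_neg h1, zero_mul, if_neg hgh]
  rw [Finset.sum_congr rfl fun a _ => Finset.sum_congr rfl fun g _ =>
    Finset.sum_congr rfl fun h _ => hchar a g h]
  rw [Finset.sum_congr rfl fun a _ => Finset.sum_congr rfl fun g _ =>
    Finset.sum_ite_eq' Finset.univ g
      (fun _ => (N : ℂ) * (U (g - a) (g - a) * (starRingEnd ℂ) (U g g)))]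
  simp only [Finset.mem_univ, if_true]
  rw [Finset.sum_comm]
  have hre : ∀ g : ZMod N, (∑ a : ZMod N, U (g - a) (g - a)) = U.trace := by
    intro g
    rw [Matrix.trace]
    exact Fintype.sum_equiv (Equiv.subLeft g) _ _ (fun a => rfl)
  have hcollect : ∀ g : ZMod N,
      (∑ a : ZMod N, (N : ℂ) * (U (g - a) (g - a) * (starRingEnd ℂ) (U g g)))
        = (N : ℂ) * U.trace * (starRingEnd ℂ) (U g g) := by
    intro g
    rw [← Finset.mul_sum, ← Finset.sum_mul, hre g, mul_assoc]
  rw [Finset.sum_congr rfl fun g _ => hcollect g, ← Finset.mul_sum]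
  congr 1
  rw [Matrix.trace, map_sum]
  rfl


end CT

/-- For `N` odd and `F ∈ SL(2, ℤ/Nℤ)`, any unitary `U` implementing `F` on the
Weyl–Heisenberg group (`U D_λ U* = D_{Fλ}`, i.e. the Clifford unitary `U_F`)
satisfies `|Tr U| ≥ 1`; in particular `Tr U_F ≠ 0`. -/
theorem clifford_unitary_trace_ge_one (N : ℕ) [NeZero N] (hN : Odd N)
    (F : Matrix (Fin 2) (Fin 2) (ZMod N)) (hdet : F.det = 1)
    (U : Matrix (ZMod N) (ZMod N) ℂ)
    (hU : U * U.conjTranspose = 1)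
    (hUF : ∀ lam : Fin 2 → ZMod N,
      U * dispMat N lam = dispMat N (F.mulVec lam) * U) :
    1 ≤ ‖U.trace‖ := by
  classical
  have hper : ∀ lam : Fin 2 → ZMod N,
      dispMat N lam * U * (dispMat N lam).conjTranspose * U.conjTranspose
        = dispMat N lam * (dispMat N (F.mulVec lam)).conjTranspose := by
    intro lam
    have h1 := congrArg Matrix.conjTranspose (hUF lam)
    rw [Matrix.conjTranspose_mul, Matrix.conjTranspose_mul] at h1
    calc dispMat N lam * U * (dispMat N lam).conjTranspose * U.conjTranspose
        = dispMat N lam * (U * ((dispMat N lam).conjTranspose * U.conjTranspose)) := by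
          simp only [Matrix.mul_assoc]
      _ = dispMat N lam *
            (U * (U.conjTranspose * (dispMat N (F.mulVec lam)).conjTranspose)) := by rw [h1]
      _ = dispMat N lam *
            ((U * U.conjTranspose) * (dispMat N (F.mulVec lam)).conjTranspose) := by
          simp only [Matrix.mul_assoc]
      _ = _ := by rw [hU, one_mul]
  have hsum := CT.sum_trace_conj hN U
  have hS : (∑ lam : Fin 2 → ZMod N,
      (dispMat N lam * U * (dispMat N lam).conjTranspose * U.conjTranspose).trace)
      = ∑ lam : Fin 2 → ZMod N, (if lam = F.mulVec lam then (N : ℂ) else 0) := by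
    refine Finset.sum_congr rfl fun lam _ => ?_
    rw [hper lam, CT.trace_disp_mul_conj hN]
  have hkey : (N : ℂ) * U.trace * (starRingEnd ℂ) U.trace
      = ∑ lam : Fin 2 → ZMod N, (if lam = F.mulVec lam then (N : ℂ) else 0) := by
    rw [← hsum, hS]
  have hreal : (N : ℝ) * Complex.normSq U.trace
      = ∑ lam : Fin 2 → ZMod N, (if lam = F.mulVec lam then (N : ℝ) else 0) := by
    have h2 : ((N : ℂ)) * ((Complex.normSq U.trace : ℝ) : ℂ)
        = ∑ lam : Fin 2 → ZMod N, (if lam = F.mulVec lam then (N : ℂ) else 0) := by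
      rw [← Complex.mul_conj, ← mul_assoc]; exact hkey
    apply Complex.ofReal_injective
    rw [Complex.ofReal_mul, Complex.ofReal_natCast, h2]
    rw [Complex.ofReal_sum]
    refine Finset.sum_congr rfl fun lam _ => ?_
    split_ifs <;> simp
  have hge : (N : ℝ) ≤ ∑ lam : Fin 2 → ZMod N, (if lam = F.mulVec lam then (N : ℝ) else 0) := by
    have h0 : (if (0 : Fin 2 → ZMod N) = F.mulVec 0 then (N : ℝ) else 0) = N := by
      rw [if_pos (Matrix.mulVec_zero F).symm]
    have hnn : ∀ lam : Fin 2 → ZMod N, lam ∈ (Finset.univ : Finset (Fin 2 → ZMod N)) →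
        (0 : ℝ) ≤ (if lam = F.mulVec lam then (N : ℝ) else 0) := by
      intro lam _; split_ifs <;> positivity
    have hle := Finset.single_le_sum hnn (Finset.mem_univ (0 : Fin 2 → ZMod N))
    rw [h0] at hle
    exact hle
  rw [← hreal] at hge
  have hNpos : (0 : ℝ) < N := by
    exact_mod_cast Nat.pos_of_ne_zero (NeZero.ne N)
  have hnormsq : 1 ≤ Complex.normSq U.trace := by
    nlinarith
  nlinarith [norm_nonneg U.trace, Complex.sq_norm U.trace]

end
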